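/- As δ → 0⁺, the inverse Gaussian tail satisfies Φ̄^{−1}(δ)² = 2 ln(1/δ) − 2 ln(2√π) − ln ln(1/δ) + o(1). -/

import Mathlib

open MeasureTheory Filter

namespace InvGaussTail

open Set Real

noncomputable def Tg (x : ℝ) : ℝ := ∫ s in Set.Ioi x, Real.exp (-s^2/2)

lemma exp_sq_eq (s : ℝ) : Real.exp (-s^2/2) = Real.exp (-(1/2) * s^2) := by ring_nf

lemma int_exp : Integrable (fun s : ℝ => Real.exp (-s^2/2)) := by
  simp_rw [exp_sq_eq]
  exact integrable_exp_neg_mul_sq (by norm_num)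

lemma tend_exp : Tendsto (fun s : ℝ => Real.exp (-s^2/2)) atTop (nhds 0) := by
  simp_rw [show ∀ s:ℝ, -s^2/2 = -((1/2)*s^2) by intro s; ring]
  exact Real.tendsto_exp_neg_atTop_nhds_zero.comp
    ((tendsto_pow_atTop two_ne_zero).const_mul_atTop (by norm_num))

lemma I1 (x : ℝ) : ∫ s in Set.Ioi x, s * Real.exp (-s^2/2) = Real.exp (-x^2/2) := by
  have h := integral_Ioi_of_hasDerivAt_of_tendsto (f := fun s : ℝ => -Real.exp (-s^2/2))
    (f' := fun s : ℝ => s * Real.exp (-s^2/2)) (a := x) (m := 0)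
    ?_ ?_ ?_ ?_
  · simpa using h
  · exact (Continuous.neg (by continuity)).continuousWithinAt
  · intro y _
    have h1 : HasDerivAt (fun s : ℝ => -s^2/2) (-y) y := by
      have := ((hasDerivAt_pow 2 y).neg.div_const 2)
      refine this.congr_deriv ?_
      push_cast; ring
    have := (h1.exp).neg
    refine this.congr_deriv ?_
    simp; ring
  · have : Integrable (fun s : ℝ => s * Real.exp (-s^2/2)) := by
      simp_rw [exp_sq_eq]
      exact integrable_mul_exp_neg_mul_sq (by norm_num)
    exact this.integrableOn
  · simpa using tend_exp.neg

lemma I2 {x : ℝ} (hx : 0 < x) :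
    ∫ s in Set.Ioi x, (1 + 1/s^2) * Real.exp (-s^2/2) = Real.exp (-x^2/2) / x := by
  have h := integral_Ioi_of_hasDerivAt_of_tendsto
    (f := fun s : ℝ => -(Real.exp (-s^2/2) / s))
    (f' := fun s : ℝ => (1 + 1/s^2) * Real.exp (-s^2/2)) (a := x) (m := 0)
    ?_ ?_ ?_ ?_
  · simpa using h
  · apply ContinuousWithinAt.neg
    apply ContinuousWithinAt.div
    · exact (Continuous.continuousWithinAt (by continuity))
    · exact continuousWithinAt_id
    · exact hx.ne'
  · intro y hy
    have hy0 : (0:ℝ) < y := lt_trans hx hy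
    have h1 : HasDerivAt (fun s : ℝ => -s^2/2) (-y) y := by
      have := ((hasDerivAt_pow 2 y).neg.div_const 2)
      refine this.congr_deriv ?_
      push_cast; ring
    have h2 : HasDerivAt (fun s : ℝ => Real.exp (-s^2/2) / s)
        ((-y * Real.exp (-y^2/2) * y - Real.exp (-y^2/2) * 1) / y^2) y := by
      exact HasDerivAt.div (by simpa [mul_comm] using h1.exp) (hasDerivAt_id y) hy0.ne'
    have := h2.neg
    refine this.congr_deriv ?_
    field_simp
    ring
  · apply Integrable.mono' ((int_exp.const_mul (1 + 1/x^2)).integrableOn)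
    · apply Measurable.aestronglyMeasurable
      measurability
    · filter_upwards [ae_restrict_mem measurableSet_Ioi] with s hs
      have hs0 : (0:ℝ) < s := lt_trans hx hs
      rw [Real.norm_eq_abs, abs_of_nonneg (by positivity)]
      apply mul_le_mul_of_nonneg_right _ (Real.exp_pos _).le
      have : 1/s^2 ≤ 1/x^2 := by
        apply one_div_le_one_div_of_le (by positivity)
        exact pow_le_pow_left₀ hx.le (le_of_lt hs) 2
      linarith
  · rw [show (0:ℝ) = -0 by ring]
    apply Tendsto.neg
    exact Tendsto.div_atTop tend_exp tendsto_id

lemma Tg_upper {x : ℝ} (hx : 0 < x) : Tg x ≤ Real.exp (-x^2/2) / x := by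
  have hint : IntegrableOn (fun s : ℝ => s * Real.exp (-s^2/2)) (Set.Ioi x) := by
    have : Integrable (fun s : ℝ => s * Real.exp (-s^2/2)) := by
      simp_rw [exp_sq_eq]; exact integrable_mul_exp_neg_mul_sq (by norm_num)
    exact this.integrableOn
  have h : Tg x ≤ ∫ s in Set.Ioi x, (s/x) * Real.exp (-s^2/2) := by
    apply setIntegral_mono_on int_exp.integrableOn
      (by simpa [mul_div_assoc, div_mul_eq_mul_div] using hint.div_const x :
        Integrable (fun s : ℝ => (s/x) * Real.exp (-s^2/2)) (volume.restrict (Set.Ioi x))) measurableSet_Ioi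
    intro s hs
    have hs1 : x ≤ s := le_of_lt hs
    nth_rewrite 1 [show Real.exp (-s^2/2) = 1 * Real.exp (-s^2/2) by ring]
    apply mul_le_mul_of_nonneg_right _ (Real.exp_pos _).le
    rw [le_div_iff₀ hx]; linarith
  calc Tg x ≤ ∫ s in Set.Ioi x, (s/x) * Real.exp (-s^2/2) := h
    _ = (1/x) * ∫ s in Set.Ioi x, s * Real.exp (-s^2/2) := by
        rw [← integral_const_mul]; congr 1; ext s; ring
    _ = Real.exp (-x^2/2) / x := by rw [I1]; ring

lemma Tg_lower {x : ℝ} (hx : 0 < x) : x / (x^2+1) * Real.exp (-x^2/2) ≤ Tg x := by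
  have hint : IntegrableOn (fun s : ℝ => (1 + 1/s^2) * Real.exp (-s^2/2)) (Set.Ioi x) := by
    apply Integrable.mono' ((int_exp.const_mul (1 + 1/x^2)).integrableOn)
    · apply Measurable.aestronglyMeasurable; measurability
    · filter_upwards [ae_restrict_mem measurableSet_Ioi] with s hs
      have hs0 : (0:ℝ) < s := lt_trans hx hs
      rw [Real.norm_eq_abs, abs_of_nonneg (by positivity)]
      apply mul_le_mul_of_nonneg_right _ (Real.exp_pos _).le
      have : 1/s^2 ≤ 1/x^2 := by
        apply one_div_le_one_div_of_le (by positivity)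
        exact pow_le_pow_left₀ hx.le (le_of_lt hs) 2
      linarith
  have h : ∫ s in Set.Ioi x, (x^2/(x^2+1)) * ((1 + 1/s^2) * Real.exp (-s^2/2)) ≤ Tg x := by
    apply setIntegral_mono_on (by exact (hint.const_mul _)) int_exp.integrableOn measurableSet_Ioi
    intro s hs
    have hs0 : (0:ℝ) < s := lt_trans hx hs
    have h1 : 1 + 1/s^2 ≤ (x^2+1)/x^2 := by
      have : 1/s^2 ≤ 1/x^2 := by
        apply one_div_le_one_div_of_le (by positivity)
        exact pow_le_pow_left₀ hx.le (le_of_lt hs) 2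
      rw [add_div, div_self (by positivity : (x:ℝ)^2 ≠ 0)]
      linarith
    rw [show (x^2/(x^2+1)) * ((1 + 1/s^2) * Real.exp (-s^2/2))
        = ((x^2/(x^2+1)) * (1 + 1/s^2)) * Real.exp (-s^2/2) by ring]
    nth_rewrite 2 [show Real.exp (-s^2/2) = 1 * Real.exp (-s^2/2) by ring]
    apply mul_le_mul_of_nonneg_right _ (Real.exp_pos _).le
    rw [div_mul_eq_mul_div, div_le_one (by positivity)]
    calc x^2 * (1 + 1/s^2) ≤ x^2 * ((x^2+1)/x^2) := by
          apply mul_le_mul_of_nonneg_left h1 (by positivity)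
      _ = x^2 + 1 := by field_simp
  calc x / (x^2+1) * Real.exp (-x^2/2)
      = (x^2/(x^2+1)) * (Real.exp (-x^2/2) / x) := by field_simp
    _ = ∫ s in Set.Ioi x, (x^2/(x^2+1)) * ((1 + 1/s^2) * Real.exp (-s^2/2)) := by
        rw [integral_const_mul, I2 hx]
    _ ≤ Tg x := h

lemma Tg_pos (x : ℝ) : 0 < Tg x := by
  apply (setIntegral_pos_iff_support_of_nonneg_ae ?_ ?_).mpr ?_
  · filter_upwards with s using (Real.exp_pos _).le
  · exact int_exp.integrableOn
  · have hsupp : (Function.support fun s : ℝ => Real.exp (-s ^ 2 / 2)) = Set.univ := by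
      ext s; simp [(Real.exp_pos _).ne']
    rw [hsupp]
    simpa using measure_Ioi_pos (α := ℝ) x

lemma Tg_anti {x y : ℝ} (h : x ≤ y) : Tg y ≤ Tg x := by
  apply setIntegral_mono_set int_exp.integrableOn
  · filter_upwards with s using (Real.exp_pos _).le
  · exact (Set.Ioi_subset_Ioi h).eventuallyLE

lemma t1 : Tendsto (fun x : ℝ => Real.log x / x^2) atTop (nhds 0) := by
  have h := Real.isLittleO_log_id_atTop.tendsto_div_nhds_zero
  have h2 := h.mul tendsto_inv_atTop_zero
  rw [mul_zero] at h2
  apply h2.congr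
  intro x
  simp only [id_eq]
  ring

lemma t2 : Tendsto (fun x : ℝ => 1/x^2) atTop (nhds (0:ℝ)) := by
  have h : Tendsto (fun x : ℝ => x^2) atTop atTop := tendsto_pow_atTop two_ne_zero
  have h2 := tendsto_inv_atTop_zero.comp h
  apply h2.congr
  intro x
  simp [Function.comp, one_div]

lemma t3 : Tendsto (fun x : ℝ => Real.log (1 + 1/x^2)) atTop (nhds 0) := by
  rw [show (0:ℝ) = Real.log 1 by simp]
  apply Filter.Tendsto.log _ one_ne_zero
  simpa using (tendsto_const_nhds (x := (1:ℝ))).add t2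

lemma logc_pos : (1:ℝ)/2 < Real.log (Real.sqrt (2*Real.pi)) := by
  rw [Real.log_sqrt (by positivity)]
  have h1 : Real.exp 1 < 2 * Real.pi := by
    have h2 := Real.exp_one_lt_d9
    have h3 := Real.pi_gt_three
    nlinarith
  have h4 := Real.log_lt_log (Real.exp_pos 1) h1
  rw [Real.log_exp] at h4
  linarith

lemma log2c : 2*Real.log (2*Real.sqrt Real.pi)
    = 2*Real.log (Real.sqrt (2*Real.pi)) + Real.log 2 := by
  have hpi := Real.pi_pos
  rw [Real.log_mul (by norm_num) (by positivity), Real.log_sqrt hpi.le,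
    Real.log_sqrt (by positivity), Real.log_mul (by norm_num) hpi.ne']
  ring

lemma G_bounds {x : ℝ} (hx1 : 1 ≤ x) :
    -2*Real.log (1+1/x^2)
      + Real.log (1 + 2*Real.log (Real.sqrt (2*Real.pi))/x^2 + 2*(Real.log x/x^2))
      ≤ x^2 - (2*(Real.log (Real.sqrt (2*Real.pi)) - Real.log (Tg x))
        - 2*Real.log (2*Real.sqrt Real.pi)
        - Real.log (Real.log (Real.sqrt (2*Real.pi)) - Real.log (Tg x))) ∧
    x^2 - (2*(Real.log (Real.sqrt (2*Real.pi)) - Real.log (Tg x))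
        - 2*Real.log (2*Real.sqrt Real.pi)
        - Real.log (Real.log (Real.sqrt (2*Real.pi)) - Real.log (Tg x)))
      ≤ Real.log (1 + 2*Real.log (Real.sqrt (2*Real.pi))/x^2 + 2*(Real.log x/x^2)
        + 2*Real.log (1+1/x^2)/x^2) := by
  set c := Real.log (Real.sqrt (2*Real.pi)) with hc
  have hc2 : (1:ℝ)/2 < c := logc_pos
  have hx : (0:ℝ) < x := lt_of_lt_of_le one_pos hx1
  have hx2 : (1:ℝ) ≤ x^2 := by nlinarith
  have hT := Tg_pos x
  have hlx : 0 ≤ Real.log x := Real.log_nonneg hx1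
  have hl1 : 0 ≤ Real.log (1+1/x^2) := by
    apply Real.log_nonneg
    have h9 : (0:ℝ) < 1/x^2 := by positivity
    linarith
  have hub : Real.log (Tg x) ≤ -x^2/2 - Real.log x := by
    have h := Real.log_le_log hT (Tg_upper hx)
    rwa [Real.log_div (Real.exp_ne_zero _) hx.ne', Real.log_exp] at h
  have hsplit : Real.log (x^2+1) = Real.log (1+1/x^2) + 2*Real.log x := by
    rw [show (1:ℝ)+1/x^2 = (x^2+1)/x^2 by field_simp,
      Real.log_div (by positivity) (by positivity), Real.log_pow]
    push_cast; ring
  have hlb : -x^2/2 + Real.log x - Real.log (x^2+1) ≤ Real.log (Tg x) := by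
    have h0 : (0:ℝ) < x/(x^2+1) * Real.exp (-x^2/2) := by positivity
    have h := Real.log_le_log h0 (Tg_lower hx)
    rw [Real.log_mul (by positivity) (Real.exp_ne_zero _),
      Real.log_div hx.ne' (by positivity), Real.log_exp] at h
    linarith
  set u := c - Real.log (Tg x) with hu
  have hu1 : c + x^2/2 + Real.log x ≤ u := by rw [hu]; linarith
  have hu2 : u ≤ c + x^2/2 + Real.log x + Real.log (1+1/x^2) := by
    rw [hu]; linarith
  have hupos : (0:ℝ) < u := by linarith
  -- G in terms of u
  have hG : x^2 - (2*u - 2*Real.log (2*Real.sqrt Real.pi) - Real.log u)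
      = (x^2 + 2*c + 2*Real.log x - 2*u) + Real.log (2*u/x^2) := by
    have e2 : Real.log (2*u/x^2) = Real.log 2 + Real.log u - 2*Real.log x := by
      rw [Real.log_div (by positivity) (by positivity),
        Real.log_mul (by norm_num) hupos.ne', Real.log_pow]
      push_cast; ring
    rw [e2, log2c, ← hc]
    ring
  set A := x^2 + 2*c + 2*Real.log x with hA
  have hApos : (0:ℝ) < A := by rw [hA]; linarith
  have hm1 : Real.log (A/x^2) ≤ Real.log (2*u/x^2) := by
    apply Real.log_le_log (by positivity)
    apply div_le_div_of_nonneg_right ?_ (by positivity)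
    · rw [hA]; linarith
  have hm2 : Real.log (2*u/x^2) ≤ Real.log ((A + 2*Real.log (1+1/x^2))/x^2) := by
    apply Real.log_le_log (by positivity)
    apply div_le_div_of_nonneg_right ?_ (by positivity)
    · rw [hA]; linarith
  have heA : A/x^2 = 1 + 2*c/x^2 + 2*(Real.log x/x^2) := by
    rw [hA]; field_simp
  have heB : (A + 2*Real.log (1+1/x^2))/x^2
      = 1 + 2*c/x^2 + 2*(Real.log x/x^2) + 2*Real.log (1+1/x^2)/x^2 := by
    rw [hA]; field_simp
  constructor
  · rw [hG]
    rw [← heA]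
    have : -2*Real.log (1+1/x^2) ≤ x^2 + 2*c + 2*Real.log x - 2*u := by linarith
    linarith [hm1]
  · rw [hG]
    rw [← heB]
    have : x^2 + 2*c + 2*Real.log x - 2*u ≤ 0 := by linarith
    linarith [hm2]

lemma Gmain : Tendsto (fun x : ℝ =>
    x^2 - (2*(Real.log (Real.sqrt (2*Real.pi)) - Real.log (Tg x))
      - 2*Real.log (2*Real.sqrt Real.pi)
      - Real.log (Real.log (Real.sqrt (2*Real.pi)) - Real.log (Tg x))))
    atTop (nhds 0) := by
  set c := Real.log (Real.sqrt (2*Real.pi)) with hc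
  have hlow : Tendsto (fun x : ℝ => -2*Real.log (1+1/x^2)
      + Real.log (1 + 2*c/x^2 + 2*(Real.log x/x^2))) atTop (nhds 0) := by
    have h2 : Tendsto (fun x : ℝ => 1 + 2*c/x^2 + 2*(Real.log x/x^2)) atTop (nhds 1) := by
      have h := ((tendsto_const_nhds (x := (1:ℝ))).add
        ((t2.const_mul (2*c)))).add (t1.const_mul 2)
      simp only [mul_zero, add_zero] at h
      apply h.congr
      intro x
      ring
    have h3 := Filter.Tendsto.log h2 one_ne_zero
    rw [Real.log_one] at h3
    simpa using (t3.const_mul (-2)).add h3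
  have hupp : Tendsto (fun x : ℝ => Real.log (1 + 2*c/x^2 + 2*(Real.log x/x^2)
      + 2*Real.log (1+1/x^2)/x^2)) atTop (nhds 0) := by
    have h2 : Tendsto (fun x : ℝ => 1 + 2*c/x^2 + 2*(Real.log x/x^2)
        + 2*Real.log (1+1/x^2)/x^2) atTop (nhds 1) := by
      have hm := (t3.const_mul 2).mul t2
      have h := (((tendsto_const_nhds (x := (1:ℝ))).add
        ((t2.const_mul (2*c)))).add (t1.const_mul 2)).add hm
      simp only [mul_zero, add_zero, zero_mul] at h
      apply h.congr
      intro x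
      ring
    have h3 := Filter.Tendsto.log h2 one_ne_zero
    rw [Real.log_one] at h3
    exact h3
  apply tendsto_of_tendsto_of_tendsto_of_le_of_le' hlow hupp
  · filter_upwards [eventually_ge_atTop 1] with x hx1
    exact (G_bounds hx1).1
  · filter_upwards [eventually_ge_atTop 1] with x hx1
    exact (G_bounds hx1).2

end InvGaussTail

open InvGaussTail in
theorem inverse_gaussian_tail_asymptotic
    (g : ℝ → ℝ)
    (hg : ∀ δ : ℝ, 0 < δ → δ < 1 / 2 →
      (∫ s in Set.Ioi (g δ), (1 / Real.sqrt (2 * Real.pi)) * Real.exp (-s ^ 2 / 2)) = δ) :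
    Tendsto (fun δ : ℝ =>
        (g δ) ^ 2 - (2 * Real.log (1 / δ) - 2 * Real.log (2 * Real.sqrt Real.pi)
          - Real.log (Real.log (1 / δ))))
      (nhdsWithin 0 (Set.Ioi 0)) (nhds 0) := by
  have hc : (0:ℝ) < Real.sqrt (2*Real.pi) := Real.sqrt_pos.mpr (by positivity)
  have hrel : ∀ δ : ℝ, 0 < δ → δ < 1/2 → Tg (g δ) = Real.sqrt (2*Real.pi) * δ := by
    intro δ h1 h2
    have h := hg δ h1 h2
    rw [MeasureTheory.integral_const_mul] at h
    have h' : (1 / Real.sqrt (2*Real.pi)) * Tg (g δ) = δ := h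
    field_simp at h'
    rw [Real.sqrt_mul (by norm_num : (0:ℝ) ≤ 2)] at h' ⊢
    linarith
  have hga : Tendsto g (nhdsWithin 0 (Set.Ioi 0)) atTop := by
    rw [tendsto_atTop]
    intro M
    set M' := max M 1 with hM'def
    have hM' : (0:ℝ) < M' := lt_of_lt_of_le one_pos (le_max_right _ _)
    have hTM : (0:ℝ) < Tg M' / Real.sqrt (2*Real.pi) := div_pos (Tg_pos _) hc
    set ε := min (1/2) (Tg M' / Real.sqrt (2*Real.pi)) with hεdef
    have hε : (0:ℝ) < ε := lt_min (by norm_num) hTM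
    filter_upwards [Ioo_mem_nhdsGT hε] with δ hδ
    by_contra hcon
    push_neg at hcon
    have h1 : g δ ≤ M' := le_trans hcon.le (le_max_left _ _)
    have h2 : Tg M' ≤ Tg (g δ) := Tg_anti h1
    have hδhalf : δ < 1/2 := lt_of_lt_of_le hδ.2 (min_le_left _ _)
    have h3 := hrel δ hδ.1 hδhalf
    have h4 : Real.sqrt (2*Real.pi) * δ < Tg M' := by
      have h5 := lt_of_lt_of_le hδ.2 (min_le_right _ _)
      rw [lt_div_iff₀ hc] at h5
      linarith
    rw [h3] at h2
    linarith
  apply Filter.Tendsto.congr' _ (Gmain.comp hga)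
  filter_upwards [Ioo_mem_nhdsGT
    (by norm_num : (0:ℝ) < 1/2)] with δ hδ
  have h3 := hrel δ hδ.1 hδ.2
  have hlog : Real.log (1/δ) = Real.log (Real.sqrt (2*Real.pi)) - Real.log (Tg (g δ)) := by
    rw [h3, Real.log_mul hc.ne' hδ.1.ne', one_div, Real.log_inv]
    ring
  simp only [Function.comp]
  rw [hlog]
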